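/- With the truncated solution sets S_{i-1}, S_i and feasibility polygons P_{i-1}, P_i as defined (P_k = {(b_k, b_k - b_{k-1}) : b ∈ S_k}), and with only the second-order constraint at index i active (no value or first-order constraint at i), the resulting feasibility set equals { (x + α_i y + w, α_i y + w) : (x,y) ∈ P_{i-1}, w ∈ [z_i^-, z_i^+] }. -/

import Mathlib

/-- The truncated solution set `S_k`: vectors (0-indexed) satisfying the value,
first-order and second-order difference constraints on the first `k` entries. -/
def solSet (xm xp ym yp zm zp al : ℕ → ℝ) (k : ℕ) : Set (ℕ → ℝ) :=
  {b | (∀ j, j < k → xm j ≤ b j ∧ b j ≤ xp j) ∧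
       (∀ j, 1 ≤ j → j < k → ym j ≤ b j - b (j - 1) ∧ b j - b (j - 1) ≤ yp j) ∧
       (∀ j, 2 ≤ j → j < k →
          zm j ≤ (b j - b (j - 1)) - al j * (b (j - 1) - b (j - 2)) ∧
          (b j - b (j - 1)) - al j * (b (j - 1) - b (j - 2)) ≤ zp j)}

/-- The feasibility polygon `P_k = {(b_{k-1}, b_{k-1} - b_{k-2}) : b ∈ S_k}`. -/
def feasSet (xm xp ym yp zm zp al : ℕ → ℝ) (k : ℕ) : Set (ℝ × ℝ) :=
  {p | ∃ b ∈ solSet xm xp ym yp zm zp al k, p = (b (k - 1), b (k - 1) - b (k - 2))}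

theorem stmt_14 (xm xp ym yp zm zp al : ℕ → ℝ)
    (hx : ∀ j, xm j ≤ xp j) (hy : ∀ j, ym j ≤ yp j) (hz : ∀ j, zm j ≤ zp j)
    (hal : ∀ j, 0 < al j) (i : ℕ) (hi : 3 ≤ i) :
    {p : ℝ × ℝ | ∃ b ∈ solSet xm xp ym yp zm zp al (i - 1),
        (zm (i - 1) ≤ (b (i - 1) - b (i - 2)) - al (i - 1) * (b (i - 2) - b (i - 3)) ∧
         (b (i - 1) - b (i - 2)) - al (i - 1) * (b (i - 2) - b (i - 3)) ≤ zp (i - 1)) ∧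
        p = (b (i - 1), b (i - 1) - b (i - 2))}
      = {p : ℝ × ℝ | ∃ q ∈ feasSet xm xp ym yp zm zp al (i - 1), ∃ w : ℝ,
          zm (i - 1) ≤ w ∧ w ≤ zp (i - 1) ∧
          p = (q.1 + al (i - 1) * q.2 + w, al (i - 1) * q.2 + w)} := by
  have e1 : i - 1 - 1 = i - 2 := by omega
  have e2 : i - 1 - 2 = i - 3 := by omega
  ext p
  simp only [Set.mem_setOf_eq, feasSet, e1, e2]
  constructor
  · rintro ⟨b, hb, ⟨h1, h2⟩, rfl⟩
    refine ⟨(b (i - 2), b (i - 2) - b (i - 3)), ⟨b, hb, rfl⟩,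
      (b (i - 1) - b (i - 2)) - al (i - 1) * (b (i - 2) - b (i - 3)), h1, h2, ?_⟩
    simp only [Prod.mk.injEq]
    constructor <;> ring
  · rintro ⟨q, ⟨b, hb, rfl⟩, w, h1, h2, rfl⟩
    refine ⟨Function.update b (i - 1)
        (b (i - 2) + al (i - 1) * (b (i - 2) - b (i - 3)) + w), ?_, ?_, ?_⟩
    · obtain ⟨hv, hf, hs⟩ := hb
      refine ⟨fun j hj => ?_, fun j hj1 hj2 => ?_, fun j hj1 hj2 => ?_⟩
      · rw [Function.update_of_ne (by omega)]; exact hv j hj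
      · rw [Function.update_of_ne (by omega), Function.update_of_ne (by omega)]
        exact hf j hj1 hj2
      · rw [Function.update_of_ne (by omega), Function.update_of_ne (by omega),
          Function.update_of_ne (by omega)]
        exact hs j hj1 hj2
    · rw [Function.update_self, Function.update_of_ne (by omega),
        Function.update_of_ne (by omega)]
      constructor
      · calc zm (i-1) ≤ w := h1
          _ = b (i - 2) + al (i - 1) * (b (i - 2) - b (i - 3)) + w - b (i - 2) -
              al (i - 1) * (b (i - 2) - b (i - 3)) := by ring
      · calc b (i - 2) + al (i - 1) * (b (i - 2) - b (i - 3)) + w - b (i - 2) -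
              al (i - 1) * (b (i - 2) - b (i - 3)) = w := by ring
          _ ≤ zp (i-1) := h2
    · rw [Function.update_self, Function.update_of_ne (by omega)]
      simp only [Prod.mk.injEq]
      exact ⟨trivial, by ring⟩
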